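/- For any μ > 0 and any path z ∈ C((-∞,0];ℋ) with z(0) = (x,y), lim_{t→-∞}|C_μ^{-1/2}z(t)|_ℋ = 0, and finite action I^μ_{-∞}(z) = (1/2)∫_{-∞}^0 |Q^{-1}(μφ''(t) + φ'(t) - Aφ(t) + Q²DF(φ(t)))|²_H dt where φ = Π₁z, one has the lower bound I^μ_{-∞}(z) ≥ |(-A)^{1/2}Q^{-1}x|²_H + 2F(x) + μ|Q^{-1}y|²_H. -/

import Mathlib

open RealInnerProductSpace MeasureTheory Filter

/-- lower bound for the action. For a path `z = (φ, φ')` on `(-∞,0]` with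
`z(0) = (x,y)` and decay at `-∞` (expressed, as in the paper, through
`|(-A)^{1/2}Q⁻¹φ(t)| + |Q⁻¹φ'(t)| → 0`, which in particular gives `F(φ(t)) → 0`), the
action `I^μ_{-∞}(z) = (1/2)∫_{-∞}^0 |Q⁻¹(μφ'' + φ' - Aφ + Q²DF(φ))|² dt` satisfies
`I^μ_{-∞}(z) ≥ |(-A)^{1/2}Q⁻¹x|² + 2F(x) + μ|Q⁻¹y|²`.
(Operators abstracted as in Statements 11 and 13.) -/
theorem stmt14
    {H : Type*} [NormedAddCommGroup H] [InnerProductSpace ℝ H]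
    (μ : ℝ) (hμ : 0 < μ)
    (A Q Qinv Q2inv Qsq sAQinv : H →ₗ[ℝ] H)
    (hAQ : ∀ u v, ⟪A u, Q2inv v⟫ = -⟪sAQinv u, sAQinv v⟫)
    (hQQ : ∀ u v, ⟪u, Q2inv v⟫ = ⟪Qinv u, Qinv v⟫)
    (hQsq : ∀ u v, ⟪Qsq u, Q2inv v⟫ = ⟪u, v⟫)
    (hQpair : ∀ u v, ⟪Qinv u, Q v⟫ = ⟪u, v⟫)
    (F : H → ℝ) (DF : H → H) (hF0 : F 0 = 0)
    (φ φ' φ'' : ℝ → H) (x y : H) (hx : φ 0 = x) (hy : φ' 0 = y)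
    (hd1 : ∀ t, HasDerivAt φ (φ' t) t)
    (hd2 : ∀ t, HasDerivAt φ' (φ'' t) t)
    (hder_sA : ∀ t, HasDerivAt (fun s => ‖sAQinv (φ s)‖ ^ 2)
      (2 * ⟪sAQinv (φ t), sAQinv (φ' t)⟫) t)
    (hder_Q : ∀ t, HasDerivAt (fun s => ‖Qinv (φ' s)‖ ^ 2)
      (2 * ⟪Qinv (φ' t), Qinv (φ'' t)⟫) t)
    (hder_F : ∀ t, HasDerivAt (fun s => F (φ s)) (⟪DF (φ t), φ' t⟫) t)
    (hdecay : Tendsto (fun t => ‖sAQinv (φ t)‖ + ‖Qinv (φ' t)‖) atBot (nhds 0))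
    (hFlim : Tendsto (fun t => F (φ t)) atBot (nhds 0))
    (haction : IntegrableOn
      (fun t => ‖Qinv (μ • φ'' t + φ' t - A (φ t) + Qsq (DF (φ t)))‖ ^ 2)
      (Set.Iic (0:ℝ)) volume)
    (hcross : IntegrableOn
      (fun t => ⟪Qinv (φ' t), Qinv (μ • φ'' t - A (φ t)) + Q (DF (φ t))⟫)
      (Set.Iic (0:ℝ)) volume) :
    ‖sAQinv x‖ ^ 2 + 2 * F x + μ * ‖Qinv y‖ ^ 2
      ≤ (1 / 2) * ∫ t in Set.Iic (0:ℝ),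
          ‖Qinv (μ • φ'' t + φ' t - A (φ t) + Qsq (DF (φ t)))‖ ^ 2 := by
  classical
  set g : ℝ → ℝ := fun t => μ * ‖Qinv (φ' t)‖ ^ 2 + ‖sAQinv (φ t)‖ ^ 2 + 2 * F (φ t) with hg
  set g' : ℝ → ℝ := fun t =>
    2 * ⟪Qinv (φ' t), Qinv (μ • φ'' t - A (φ t)) + Q (DF (φ t))⟫ with hg'
  -- derivative of g
  have hgd : ∀ t, HasDerivAt g (g' t) t := by
    intro t
    have h := (((hder_Q t).const_mul μ).add (hder_sA t)).add ((hder_F t).const_mul 2)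
    convert h using 1
    show 2 * ⟪Qinv (φ' t), Qinv (μ • φ'' t - A (φ t)) + Q (DF (φ t))⟫ = _
    have e1 : ⟪Qinv (φ' t), Qinv (μ • φ'' t - A (φ t)) + Q (DF (φ t))⟫
        = μ * ⟪Qinv (φ' t), Qinv (φ'' t)⟫ + ⟪sAQinv (φ t), sAQinv (φ' t)⟫
          + ⟪DF (φ t), φ' t⟫ := by
      rw [inner_add_right, map_sub, LinearMap.map_smul, inner_sub_right, inner_smul_right]
      have h2 : ⟪Qinv (φ' t), Qinv (A (φ t))⟫ = -⟪sAQinv (φ t), sAQinv (φ' t)⟫ := by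
        rw [real_inner_comm, ← hQQ, hAQ]
      have h3 : ⟪Qinv (φ' t), Q (DF (φ t))⟫ = ⟪DF (φ t), φ' t⟫ := by
        rw [hQpair, real_inner_comm]
      rw [h2, h3]; ring
    rw [e1]; ring
    all_goals rfl
  -- g tends to 0 at -∞
  have hsA0 : Tendsto (fun t => ‖sAQinv (φ t)‖) atBot (nhds 0) := by
    refine squeeze_zero (fun t => norm_nonneg _) (fun t => ?_) hdecay
    exact le_add_of_nonneg_right (norm_nonneg _)
  have hQ0 : Tendsto (fun t => ‖Qinv (φ' t)‖) atBot (nhds 0) := by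
    refine squeeze_zero (fun t => norm_nonneg _) (fun t => ?_) hdecay
    exact le_add_of_nonneg_left (norm_nonneg _)
  have hglim : Tendsto g atBot (nhds 0) := by
    have h1 : Tendsto (fun t => μ * ‖Qinv (φ' t)‖ ^ 2) atBot (nhds 0) := by
      have := (hQ0.pow 2).const_mul μ
      simpa using this
    have h2 : Tendsto (fun t => ‖sAQinv (φ t)‖ ^ 2) atBot (nhds 0) := by
      have := hsA0.pow 2
      simpa using this
    have h3 : Tendsto (fun t => 2 * F (φ t)) atBot (nhds 0) := by
      have := hFlim.const_mul 2
      simpa using this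
    have := (h1.add h2).add h3
    simpa using this
  -- g' integrable
  have hg'int : IntegrableOn g' (Set.Iic (0:ℝ)) volume := by
    exact hcross.const_mul 2
  -- FTC
  have hFTC : ∫ t in Set.Iic (0:ℝ), g' t = g 0 := by
    have := integral_Iic_of_hasDerivAt_of_tendsto' (f := g) (f' := g') (a := (0:ℝ))
      (fun t _ => hgd t) hg'int hglim
    simpa using this
  -- pointwise bound: 2 * g' t ≤ integrand t
  have hpt : ∀ t, 2 * g' t ≤ ‖Qinv (μ • φ'' t + φ' t - A (φ t) + Qsq (DF (φ t)))‖ ^ 2 := by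
    intro t
    set a : H := Qinv (μ • φ'' t - A (φ t)) + Qinv (Qsq (DF (φ t))) with ha
    set w : H := Qinv (φ' t) with hw
    have hsplit : Qinv (μ • φ'' t + φ' t - A (φ t) + Qsq (DF (φ t))) = a + w := by
      simp only [ha, hw, map_add, map_sub, LinearMap.map_smul]
      abel
    have hinner : ⟪w, a⟫ = ⟪Qinv (φ' t), Qinv (μ • φ'' t - A (φ t)) + Q (DF (φ t))⟫ := by
      rw [ha, inner_add_right, inner_add_right]
      congr 1
      rw [real_inner_comm, ← hQQ, hQsq, hQpair, real_inner_comm]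
    have key : 4 * ⟪w, a⟫ ≤ ‖a + w‖ ^ 2 := by
      have h0 : (0:ℝ) ≤ ‖a - w‖ ^ 2 := sq_nonneg _
      have hexp : ‖a + w‖ ^ 2 = ‖a - w‖ ^ 2 + 4 * ⟪a, w⟫ := by
        rw [← real_inner_self_eq_norm_sq, ← real_inner_self_eq_norm_sq]
        simp only [inner_add_add_self, inner_sub_sub_self]
        rw [real_inner_comm w a]
        ring
      rw [hexp, real_inner_comm]
      linarith
    rw [hsplit]
    calc 2 * g' t = 4 * ⟪w, a⟫ := by rw [hinner]; simp only [hg']; ring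
      _ ≤ ‖a + w‖ ^ 2 := key
  -- integrate
  have hmono : ∫ t in Set.Iic (0:ℝ), 2 * g' t
      ≤ ∫ t in Set.Iic (0:ℝ), ‖Qinv (μ • φ'' t + φ' t - A (φ t) + Qsq (DF (φ t)))‖ ^ 2 :=
    setIntegral_mono (hg'int.const_mul 2) haction (fun t => hpt t)
  have h2g : ∫ t in Set.Iic (0:ℝ), 2 * g' t = 2 * g 0 := by
    rw [integral_const_mul, hFTC]
  have hg0 : g 0 = ‖sAQinv x‖ ^ 2 + 2 * F x + μ * ‖Qinv y‖ ^ 2 := by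
    simp [hg, hx, hy]; ring
  have key : 2 * g 0
      ≤ ∫ t in Set.Iic (0:ℝ), ‖Qinv (μ • φ'' t + φ' t - A (φ t) + Qsq (DF (φ t)))‖ ^ 2 := by
    rw [← h2g]; exact hmono
  rw [← hg0]
  have h12 : (0:ℝ) ≤ 1/2 := by norm_num
  have := mul_le_mul_of_nonneg_left key h12
  calc g 0 = (1/2) * (2 * g 0) := by ring
    _ ≤ _ := this
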